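/- Let b ∈ APS^1(ℝ, ℝ) with b ≥ 0, and let (U₂(t,s))_{t≥s} be a uniformly bounded bi-almost periodic evolution family (‖U₂(t,s)‖ ≤ M). Then the rescaled family V(t,s) = e^{−∫_s^t b(σ)dσ} U₂(t,s) is bi-almost periodic: for every sequence (σ_n) there is a subsequence (τ_n), a function b̃, and a family Ũ₂ such that ‖V(t+τ_n, s+τ_n) − e^{−∫_s^t b̃(σ)dσ} Ũ₂(t,s)‖ → 0 uniformly in t ≥ s. -/

import Mathlib

open MeasureTheory Set Filter

private lemma intInt_of_loc {b : ℝ → ℝ} (hbloc : LocallyIntegrable b volume)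
    (a c : ℝ) : IntervalIntegrable b volume a c :=
  (hbloc.integrableOn_isCompact isCompact_uIcc).intervalIntegrable

private lemma intInt_translate {b : ℝ → ℝ} (hbloc : LocallyIntegrable b volume)
    (τ a c : ℝ) : IntervalIntegrable (fun σ => b (σ + τ)) volume a c := by
  have h := (intInt_of_loc hbloc (a + τ) (c + τ)).comp_add_right τ
  simpa using h

private lemma integral_le_add_abs {f g : ℝ → ℝ} {a c : ℝ} (hac : a ≤ c)
    (hf : IntervalIntegrable f volume a c) (hg : IntervalIntegrable g volume a c) :
    ∫ σ in a..c, f σ ≤ (∫ σ in a..c, g σ) + ∫ σ in a..c, |f σ - g σ| := by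
  have h1 := intervalIntegral.integral_sub hf hg
  have h2 : (∫ σ in a..c, (f σ - g σ)) ≤ ∫ σ in a..c, |f σ - g σ| :=
    intervalIntegral.integral_mono_on hac (hf.sub hg) (hf.sub hg).abs (fun x _ => le_abs_self _)
  linarith

private lemma abs_integral_sub_le {f g : ℝ → ℝ} {a c : ℝ} (hac : a ≤ c)
    (hf : IntervalIntegrable f volume a c) (hg : IntervalIntegrable g volume a c) :
    |(∫ σ in a..c, f σ) - ∫ σ in a..c, g σ| ≤ ∫ σ in a..c, |f σ - g σ| := by
  rw [← intervalIntegral.integral_sub hf hg]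
  exact intervalIntegral.abs_integral_le_integral_abs hac

private lemma unit_sum_le {h : ℝ → ℝ} (hi : ∀ a c : ℝ, IntervalIntegrable h volume a c)
    {ε : ℝ} (hu : ∀ t : ℝ, (∫ σ in t..t + 1, h σ) ≤ ε) :
    ∀ (k : ℕ) (t : ℝ), (∫ σ in t..t + (k : ℝ), h σ) ≤ k * ε := by
  intro k
  induction k with
  | zero => intro t; simp
  | succ k ih =>
    intro t
    have hadd : (∫ σ in t..t + 1, h σ) + ∫ σ in (t + 1)..(t + ((k + 1 : ℕ) : ℝ)), h σ
        = ∫ σ in t..t + ((k + 1 : ℕ) : ℝ), h σ :=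
      intervalIntegral.integral_add_adjacent_intervals (hi _ _) (hi _ _)
    have h2 : (∫ σ in (t + 1)..(t + ((k + 1 : ℕ) : ℝ)), h σ) ≤ k * ε := by
      have h3 := ih (t + 1)
      have he : t + 1 + (k : ℝ) = t + ((k + 1 : ℕ) : ℝ) := by push_cast; ring
      rwa [he] at h3
    have h1 := hu t
    push_cast at hadd h2 ⊢
    linarith

private lemma block_sum_ge {h : ℝ → ℝ} (hi : ∀ a c : ℝ, IntervalIntegrable h volume a c)
    {c L : ℝ} (hL : 0 ≤ L) (hc : ∀ t : ℝ, c ≤ ∫ σ in t..t + L, h σ) :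
    ∀ (m : ℕ) (t : ℝ), (m : ℝ) * c ≤ ∫ σ in t..t + (m : ℝ) * L, h σ := by
  intro m
  induction m with
  | zero => intro t; simp
  | succ m ih =>
    intro t
    have hadd : (∫ σ in t..t + L, h σ) + ∫ σ in t + L..t + ((m + 1 : ℕ) : ℝ) * L, h σ
        = ∫ σ in t..t + ((m + 1 : ℕ) : ℝ) * L, h σ :=
      intervalIntegral.integral_add_adjacent_intervals (hi _ _) (hi _ _)
    have h2 : (m : ℝ) * c ≤ ∫ σ in t + L..t + ((m + 1 : ℕ) : ℝ) * L, h σ := by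
      have h3 := ih (t + L)
      have he : t + L + (m : ℝ) * L = t + ((m + 1 : ℕ) : ℝ) * L := by push_cast; ring
      rwa [he] at h3
    have h1 := hc t
    push_cast at hadd h2 ⊢
    linarith

private lemma exp_neg_lip {x y : ℝ} (hx : 0 ≤ x) (hxy : x ≤ y) :
    Real.exp (-x) - Real.exp (-y) ≤ y - x := by
  have h1 : Real.exp (-y) = Real.exp (-x) * Real.exp (x - y) := by
    rw [← Real.exp_add]; ring_nf
  have h2 : Real.exp (-x) ≤ 1 := by
    have := Real.exp_le_exp.mpr (neg_nonpos.mpr hx)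
    simpa using this
  have h3 : x - y + 1 ≤ Real.exp (x - y) := Real.add_one_le_exp _
  have h4 : Real.exp (x - y) ≤ 1 := by
    have := Real.exp_le_exp.mpr (sub_nonpos.mpr hxy)
    simpa using this
  have h5 : 0 < Real.exp (-x) := Real.exp_pos _
  nlinarith

private lemma abs_exp_neg_sub_le {x y : ℝ} (hx : 0 ≤ x) (hy : 0 ≤ y) :
    |Real.exp (-x) - Real.exp (-y)| ≤ |x - y| := by
  rcases le_total x y with h | h
  · have h1 := exp_neg_lip hx h
    have h2 : Real.exp (-y) ≤ Real.exp (-x) := Real.exp_le_exp.mpr (by linarith)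
    rw [abs_of_nonneg (by linarith), abs_of_nonpos (by linarith)]
    linarith
  · have h1 := exp_neg_lip hy h
    have h2 : Real.exp (-x) ≤ Real.exp (-y) := Real.exp_le_exp.mpr (by linarith)
    rw [abs_of_nonpos (by linarith), abs_of_nonneg (by linarith)]
    linarith
private lemma key_exp_lemma (b : ℝ → ℝ) (hbnn : ∀ t, 0 ≤ b t)
    (hbloc : LocallyIntegrable b volume)
    (hb : ∀ u : ℕ → ℝ, ∃ φ : ℕ → ℕ, StrictMono φ ∧ ∃ btil : ℝ → ℝ,
      (∀ᵐ s : ℝ ∂volume, 0 ≤ btil s) ∧ LocallyIntegrable btil volume ∧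
      ∀ ε > 0, ∃ N : ℕ, ∀ n ≥ N, ∀ t : ℝ,
        ∫ σ in t..t + 1, |b (σ + u (φ n)) - btil σ| < ε)
    (btil : ℝ → ℝ) (hbtnn : ∀ᵐ s : ℝ ∂volume, 0 ≤ btil s)
    (hbtloc : LocallyIntegrable btil volume)
    (v : ℕ → ℝ)
    (hv : ∀ ε > 0, ∃ N : ℕ, ∀ n ≥ N, ∀ t : ℝ,
        (∫ σ in t..t + 1, |b (σ + v n) - btil σ|) < ε) :
    ∀ ε > 0, ∃ N : ℕ, ∀ n ≥ N, ∀ t s : ℝ, s ≤ t →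
      |Real.exp (-∫ σ in s..t, b (σ + v n)) - Real.exp (-∫ σ in s..t, btil σ)| < ε := by
  have hib := intInt_of_loc hbloc
  have hibτ := intInt_translate hbloc
  have hibt := intInt_of_loc hbtloc
  have hidiff : ∀ (w a c : ℝ), IntervalIntegrable (fun σ => |b (σ + w) - btil σ|) volume a c :=
    fun w a c => ((hibτ w a c).sub (hibt a c)).abs
  have hbtnn' : (0 : ℝ → ℝ) ≤ᶠ[ae volume] btil := by
    filter_upwards [hbtnn] with x hx; exact hx
  have hΦnn : ∀ (w s t : ℝ), s ≤ t → 0 ≤ ∫ σ in s..t, b (σ + w) :=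
    fun w s t hst => intervalIntegral.integral_nonneg hst (fun x _ => hbnn _)
  have hΨnn : ∀ (s t : ℝ), s ≤ t → 0 ≤ ∫ σ in s..t, btil σ :=
    fun s t hst => intervalIntegral.integral_nonneg_of_ae hst hbtnn'
  have htrans : ∀ (w s t : ℝ), (∫ σ in s..t, b (σ + w)) = ∫ σ in (s + w)..(t + w), b σ :=
    fun w s t => intervalIntegral.integral_comp_add_right b w
  have hbnnae : ∀ (c d : ℝ), (0 : ℝ → ℝ) ≤ᶠ[ae (volume.restrict (Set.Ioc c d))] b :=
    fun c d => Filter.Eventually.of_forall (fun x => hbnn x)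
  have hbtnnae : ∀ (c d : ℝ), (0 : ℝ → ℝ) ≤ᶠ[ae (volume.restrict (Set.Ioc c d))] btil :=
    fun c d => hbtnn'.filter_mono (ae_mono Measure.restrict_le_self)
  by_cases hA : ∃ L : ℕ, ∃ c : ℝ, 0 < c ∧ ∀ t : ℝ, c ≤ ∫ σ in t..t + (L : ℝ), b σ
  · obtain ⟨L, c, hc, hLb⟩ := hA
    have hL1 : 1 ≤ L := by
      rcases Nat.eq_zero_or_pos L with h0 | h
      · exfalso
        have h0' := hLb 0
        rw [h0] at h0'
        norm_num at h0'
        linarith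
      · exact h
    have hLpos : (0 : ℝ) < L := by exact_mod_cast Nat.lt_of_lt_of_le Nat.zero_lt_one hL1
    obtain ⟨N₀, hN₀⟩ := hv (c / (2 * L)) (by positivity)
    have hbtlow : ∀ t : ℝ, c / 2 ≤ ∫ σ in t..t + (L : ℝ), btil σ := by
      intro t
      have h1 : c ≤ ∫ σ in t..t + (L : ℝ), b (σ + v N₀) := by
        rw [htrans]
        have h2 := hLb (t + v N₀)
        have he : t + v N₀ + (L : ℝ) = t + (L : ℝ) + v N₀ := by ring
        rwa [he] at h2
      have h2 : (∫ σ in t..t + (L : ℝ), |b (σ + v N₀) - btil σ|) ≤ L * (c / (2 * L)) :=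
        unit_sum_le (hidiff (v N₀)) (fun r => le_of_lt (hN₀ N₀ le_rfl r)) L t
      have h3 := integral_le_add_abs (a := t) (c := t + (L : ℝ)) (by linarith)
        (hibτ (v N₀) _ _) (hibt _ _)
      have h4 : (L : ℝ) * (c / (2 * L)) = c / 2 := by field_simp
      linarith
    intro ε hε
    obtain ⟨m₀, hm₀⟩ := exists_nat_gt (Real.log (2 / ε) / (c / 2))
    set m : ℕ := m₀ + 1 with hm
    have hm1 : 1 ≤ m := Nat.le_add_left 1 m₀
    have hmc : Real.log (2 / ε) < (m : ℝ) * (c / 2) := by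
      have hdiv := (div_lt_iff₀ (show (0 : ℝ) < c / 2 by positivity)).mp hm₀
      have hmm : (m₀ : ℝ) ≤ (m : ℝ) := by exact_mod_cast Nat.le_succ m₀
      nlinarith
    have hexp : Real.exp (-((m : ℝ) * (c / 2))) < ε / 2 := by
      have h2e : (0 : ℝ) < 2 / ε := by positivity
      have hlt : Real.exp (-((m : ℝ) * (c / 2))) < Real.exp (-Real.log (2 / ε)) :=
        Real.exp_lt_exp.mpr (by linarith)
      have heq : Real.exp (-Real.log (2 / ε)) = ε / 2 := by
        rw [Real.exp_neg, Real.exp_log h2e]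
        field_simp
      linarith
    set k : ℕ := m * L with hk
    have hk1 : 1 ≤ k := by
      calc 1 = 1 * 1 := by norm_num
      _ ≤ m * L := Nat.mul_le_mul hm1 hL1
    have hkpos : (0 : ℝ) < k := by exact_mod_cast Nat.lt_of_lt_of_le Nat.zero_lt_one hk1
    have hcast : ((k : ℕ) : ℝ) = (m : ℝ) * (L : ℝ) := by rw [hk]; push_cast; ring
    obtain ⟨N, hN⟩ := hv (ε / (2 * k)) (by positivity)
    refine ⟨N, fun n hn t s hst => ?_⟩
    rcases le_or_gt (t - s) (k : ℝ) with hshort | hlong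
    · have hd1 : (∫ σ in s..t, |b (σ + v n) - btil σ|)
          ≤ ∫ σ in s..s + (k : ℝ), |b (σ + v n) - btil σ| := by
        apply intervalIntegral.integral_mono_interval le_rfl hst (by linarith)
          (Filter.Eventually.of_forall (fun x => abs_nonneg _)) (hidiff (v n) _ _)
      have hd2 : (∫ σ in s..s + (k : ℝ), |b (σ + v n) - btil σ|) ≤ k * (ε / (2 * k)) :=
        unit_sum_le (hidiff (v n)) (fun r => le_of_lt (hN n hn r)) k s
      have hd3 := abs_integral_sub_le hst (hibτ (v n) s t) (hibt s t)
      have hd4 := abs_exp_neg_sub_le (hΦnn (v n) s t hst) (hΨnn s t hst)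
      have hd5 : (k : ℝ) * (ε / (2 * k)) = ε / 2 := by field_simp
      linarith
    · have hΦK : (m : ℝ) * c ≤ ∫ σ in s..t, b (σ + v n) := by
        rw [htrans]
        have hblock := block_sum_ge hib (le_of_lt hLpos) hLb m (s + v n)
        have hml : (0 : ℝ) ≤ (m : ℝ) * (L : ℝ) := by positivity
        have hmono : (∫ σ in (s + v n)..(s + v n + (m : ℝ) * (L : ℝ)), b σ)
            ≤ ∫ σ in (s + v n)..(t + v n), b σ := by
          apply intervalIntegral.integral_mono_interval le_rfl (by linarith)
            (by linarith [hcast]) (hbnnae _ _) (hib _ _)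
        linarith
      have hΨK : (m : ℝ) * (c / 2) ≤ ∫ σ in s..t, btil σ := by
        have hblock := block_sum_ge hibt (le_of_lt hLpos) hbtlow m s
        have hml : (0 : ℝ) ≤ (m : ℝ) * (L : ℝ) := by positivity
        have hmono : (∫ σ in s..(s + (m : ℝ) * (L : ℝ)), btil σ) ≤ ∫ σ in s..t, btil σ := by
          apply intervalIntegral.integral_mono_interval le_rfl (by linarith)
            (by linarith [hcast]) (hbtnnae _ _) (hibt _ _)
        linarith
      have hmc2 : (m : ℝ) * (c / 2) ≤ (m : ℝ) * c :=
        mul_le_mul_of_nonneg_left (by linarith) (Nat.cast_nonneg m)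
      have hE : Real.exp (-(∫ σ in s..t, b (σ + v n))) < ε / 2 := by
        have hle : Real.exp (-(∫ σ in s..t, b (σ + v n))) ≤ Real.exp (-((m : ℝ) * (c / 2))) :=
          Real.exp_le_exp.mpr (by linarith)
        linarith
      have hF : Real.exp (-(∫ σ in s..t, btil σ)) < ε / 2 := by
        have hle : Real.exp (-(∫ σ in s..t, btil σ)) ≤ Real.exp (-((m : ℝ) * (c / 2))) :=
          Real.exp_le_exp.mpr (by linarith)
        linarith
      rw [abs_sub_lt_iff]
      constructor
      · linarith [Real.exp_pos (-(∫ σ in s..t, btil σ))]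
      · linarith [Real.exp_pos (-(∫ σ in s..t, b (σ + v n)))]
  · push_neg at hA
    have hTk : ∀ kk : ℕ, ∃ t : ℝ, (∫ σ in t..t + ((2 * kk + 2 : ℕ) : ℝ), b σ) < 1 / (kk + 1) :=
      fun kk => hA (2 * kk + 2) (1 / (kk + 1)) (by positivity)
    choose tk htk using hTk
    obtain ⟨φ', hφ', g, hgnn, hgloc, hgapx0⟩ := hb (fun kk => tk kk + (kk + 1))
    have hig := intInt_of_loc hgloc
    have hgapx : ∀ ε > 0, ∃ N, ∀ n ≥ N, ∀ t : ℝ,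
        (∫ σ in t..t + 1, |b (σ + (tk (φ' n) + ((φ' n : ℝ) + 1))) - g σ|) < ε := by
      intro ε hε
      obtain ⟨N, hN⟩ := hgapx0 ε hε
      exact ⟨N, fun n hn t => by simpa using hN n hn t⟩
    have hgz : ∀ t : ℝ, (∫ σ in t..t + 1, g σ) ≤ 0 := by
      intro t
      apply le_of_forall_pos_le_add
      intro ε hε
      obtain ⟨N, hN⟩ := hgapx (ε / 2) (by positivity)
      obtain ⟨w, hw1, hw2⟩ : ∃ w : ℝ, ((∫ σ in t..t + 1, |b (σ + w) - g σ|) < ε / 2) ∧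
          ((∫ σ in t..t + 1, b (σ + w)) ≤ ε / 2) := by
        set n : ℕ := max N (max ⌈|t|⌉₊ ⌈2 / ε⌉₊) with hn
        refine ⟨tk (φ' n) + ((φ' n : ℝ) + 1), hN n (le_max_left _ _) t, ?_⟩
        set K : ℕ := φ' n with hKdef
        have hnK : n ≤ K := hφ'.le_apply
        have htK : |t| ≤ (K : ℝ) := by
          have h1 : (⌈|t|⌉₊ : ℕ) ≤ K :=
            le_trans (le_trans (le_max_left _ _) (le_max_right N _)) hnK
          exact le_trans (Nat.le_ceil _) (by exact_mod_cast h1)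
        have hεK : 2 / ε ≤ (K : ℝ) := by
          have h1 : (⌈2 / ε⌉₊ : ℕ) ≤ K :=
            le_trans (le_trans (le_max_right _ _) (le_max_right N _)) hnK
          exact le_trans (Nat.le_ceil _) (by exact_mod_cast h1)
        rw [htrans]
        have hmono : (∫ σ in (t + (tk K + ((K : ℝ) + 1)))..(t + 1 + (tk K + ((K : ℝ) + 1))), b σ)
            ≤ ∫ σ in (tk K)..(tk K + ((2 * K + 2 : ℕ) : ℝ)), b σ := by
          apply intervalIntegral.integral_mono_interval ?_ (by linarith) ?_ (hbnnae _ _) (hib _ _)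
          · have h2 := neg_abs_le t
            linarith
          · have h2 := le_abs_self t
            push_cast
            linarith
        have hfin := htk K
        have hK2 : 1 / ((K : ℝ) + 1) ≤ ε / 2 := by
          have h2e : (0 : ℝ) < 2 / ε := by positivity
          have h1 : 1 / ((K : ℝ) + 1) ≤ 1 / (2 / ε) :=
            one_div_le_one_div_of_le h2e (by linarith)
          have h2 : 1 / (2 / ε) = ε / 2 := by field_simp
          linarith
        push_cast at hfin hmono
        linarith [hmono]
      have hstep : (∫ σ in t..t + 1, g σ)
          ≤ (∫ σ in t..t + 1, b (σ + w)) + ∫ σ in t..t + 1, |g σ - b (σ + w)| :=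
        integral_le_add_abs (by linarith) (hig _ _) (hibτ w _ _)
      have habs : (∫ σ in t..t + 1, |g σ - b (σ + w)|) = ∫ σ in t..t + 1, |b (σ + w) - g σ| := by
        simp_rw [abs_sub_comm]
      linarith
    have hbz : ∀ t : ℝ, (∫ σ in t..t + 1, b σ) ≤ 0 := by
      intro t
      apply le_of_forall_pos_le_add
      intro ε hε
      obtain ⟨N, hN⟩ := hgapx ε hε
      obtain ⟨w, hw⟩ : ∃ w : ℝ, ∀ r : ℝ, (∫ σ in r..r + 1, |b (σ + w) - g σ|) < ε :=
        ⟨tk (φ' N) + ((φ' N : ℝ) + 1), fun r => hN N le_rfl r⟩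
      have h1 : (∫ σ in t..t + 1, b σ) = ∫ σ in (t - w)..(t - w + 1), b (σ + w) := by
        rw [htrans]
        congr 1 <;> ring
      have happrox : (∫ σ in (t - w)..(t - w + 1), |b (σ + w) - g σ|) < ε := hw (t - w)
      have hstep := integral_le_add_abs (f := fun σ => b (σ + w)) (g := g)
        (a := t - w) (c := t - w + 1) (by linarith) (hibτ w _ _) (hig _ _)
      have hgz' := hgz (t - w)
      rw [h1]
      linarith
    have hbint : ∀ (w s t : ℝ), s ≤ t → (∫ σ in s..t, b (σ + w)) = 0 := by
      intro w s t hst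
      refine le_antisymm ?_ (hΦnn w s t hst)
      rw [htrans]
      set kk : ℕ := ⌈t - s⌉₊ with hkk
      have h1 : (∫ σ in (s + w)..(t + w), b σ) ≤ ∫ σ in (s + w)..(s + w + (kk : ℝ)), b σ := by
        apply intervalIntegral.integral_mono_interval le_rfl (by linarith)
          (by linarith [Nat.le_ceil (t - s)]) (hbnnae _ _) (hib _ _)
      have h2 : (∫ σ in (s + w)..(s + w + (kk : ℝ)), b σ) ≤ kk * 0 := unit_sum_le hib hbz kk (s + w)
      simpa using le_trans h1 h2
    have hbtz : ∀ t : ℝ, (∫ σ in t..t + 1, btil σ) ≤ 0 := by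
      intro t
      apply le_of_forall_pos_le_add
      intro ε hε
      obtain ⟨N, hN⟩ := hv ε hε
      have hstep := integral_le_add_abs (f := btil) (g := fun σ => b (σ + v N))
        (a := t) (c := t + 1) (by linarith) (hibt _ _) (hibτ _ _ _)
      have habs : (∫ σ in t..t + 1, |btil σ - b (σ + v N)|)
          = ∫ σ in t..t + 1, |b (σ + v N) - btil σ| := by
        simp_rw [abs_sub_comm]
      have h0 : (∫ σ in t..t + 1, b (σ + v N)) = 0 := hbint (v N) t (t + 1) (by linarith)
      have h5 := hN N le_rfl t
      linarith
    have hbtint : ∀ s t : ℝ, s ≤ t → (∫ σ in s..t, btil σ) = 0 := by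
      intro s t hst
      refine le_antisymm ?_ (hΨnn s t hst)
      set kk : ℕ := ⌈t - s⌉₊ with hkk
      have h1 : (∫ σ in s..t, btil σ) ≤ ∫ σ in s..(s + (kk : ℝ)), btil σ := by
        apply intervalIntegral.integral_mono_interval le_rfl hst
          (by linarith [Nat.le_ceil (t - s)]) (hbtnnae _ _) (hibt _ _)
      have h2 : (∫ σ in s..(s + (kk : ℝ)), btil σ) ≤ kk * 0 := unit_sum_le hibt hbtz kk s
      simpa using le_trans h1 h2
    intro ε hε
    refine ⟨0, fun n _ t s hst => ?_⟩
    rw [hbint (v n) s t hst, hbtint s t hst]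
    simpa using hε
theorem rescaled_evolution_family_bi_almost_periodic {X : Type*}
    [NormedAddCommGroup X] [NormedSpace ℝ X]
    (b : ℝ → ℝ) (hbnn : ∀ t, 0 ≤ b t)
    (hbloc : LocallyIntegrable b volume)
    -- Bochner-type sequential S¹-almost periodicity of b
    (hb : ∀ u : ℕ → ℝ, ∃ φ : ℕ → ℕ, StrictMono φ ∧ ∃ btil : ℝ → ℝ,
      (∀ᵐ s : ℝ ∂volume, 0 ≤ btil s) ∧ LocallyIntegrable btil volume ∧
      ∀ ε > 0, ∃ N : ℕ, ∀ n ≥ N, ∀ t : ℝ,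
        ∫ σ in t..t + 1, |b (σ + u (φ n)) - btil σ| < ε)
    (U₂ : ℝ → ℝ → X →L[ℝ] X) (M : ℝ)
    (hM : ∀ t s : ℝ, s ≤ t → ‖U₂ t s‖ ≤ M)
    -- sequential bi-almost periodicity of the evolution family
    (hU : ∀ u : ℕ → ℝ, ∃ φ : ℕ → ℕ, StrictMono φ ∧ ∃ Util : ℝ → ℝ → X →L[ℝ] X,
      ∀ ε > 0, ∃ N : ℕ, ∀ n ≥ N, ∀ t s : ℝ, s ≤ t →
        ‖U₂ (t + u (φ n)) (s + u (φ n)) - Util t s‖ < ε) :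
    ∀ u : ℕ → ℝ, ∃ φ : ℕ → ℕ, StrictMono φ ∧
      ∃ btil : ℝ → ℝ, ∃ Util : ℝ → ℝ → X →L[ℝ] X,
      ∀ ε > 0, ∃ N : ℕ, ∀ n ≥ N, ∀ t s : ℝ, s ≤ t →
        ‖Real.exp (-∫ σ in s..t, b (σ + u (φ n))) • U₂ (t + u (φ n)) (s + u (φ n)) -
          Real.exp (-∫ σ in s..t, btil σ) • Util t s‖ < ε := by
  intro u
  obtain ⟨φ₁, hφ₁, btil, hbtnn, hbtloc, hbtapx⟩ := hb u
  obtain ⟨φ₂, hφ₂, Util, hUtil⟩ := hU (u ∘ φ₁)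
  refine ⟨φ₁ ∘ φ₂, hφ₁.comp hφ₂, btil, Util, ?_⟩
  have hv : ∀ ε > 0, ∃ N : ℕ, ∀ n ≥ N, ∀ t : ℝ,
      (∫ σ in t..t + 1, |b (σ + u (φ₁ (φ₂ n))) - btil σ|) < ε := by
    intro ε hε
    obtain ⟨N, hN⟩ := hbtapx ε hε
    exact ⟨N, fun n hn t => hN (φ₂ n) (le_trans hn hφ₂.le_apply) t⟩
  have KL : ∀ ε > 0, ∃ N : ℕ, ∀ n ≥ N, ∀ t s : ℝ, s ≤ t →
      |Real.exp (-∫ σ in s..t, b (σ + u (φ₁ (φ₂ n)))) -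
        Real.exp (-∫ σ in s..t, btil σ)| < ε := by
    have h := key_exp_lemma b hbnn hbloc hb btil hbtnn hbtloc (fun n => u (φ₁ (φ₂ n))) hv
    intro ε hε
    obtain ⟨N, hN⟩ := h ε hε
    exact ⟨N, fun n hn t s hst => by simpa using hN n hn t s hst⟩
  have hM0 : 0 ≤ M := le_trans (norm_nonneg _) (hM 0 0 le_rfl)
  have hUb : ∀ t s : ℝ, s ≤ t → ‖Util t s‖ ≤ M + 1 := by
    intro t s hst
    obtain ⟨N, hN⟩ := hUtil 1 one_pos
    have h1 := hN N le_rfl t s hst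
    have h2 := hM (t + (u ∘ φ₁) (φ₂ N)) (s + (u ∘ φ₁) (φ₂ N)) (by linarith)
    have h4 : ‖Util t s‖ ≤ ‖U₂ (t + (u ∘ φ₁) (φ₂ N)) (s + (u ∘ φ₁) (φ₂ N))‖ +
        ‖U₂ (t + (u ∘ φ₁) (φ₂ N)) (s + (u ∘ φ₁) (φ₂ N)) - Util t s‖ := by
      have h5 := norm_sub_le (U₂ (t + (u ∘ φ₁) (φ₂ N)) (s + (u ∘ φ₁) (φ₂ N)))
        (U₂ (t + (u ∘ φ₁) (φ₂ N)) (s + (u ∘ φ₁) (φ₂ N)) - Util t s)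
      simpa using h5
    linarith
  intro ε hε
  have hM1 : (0 : ℝ) < M + 1 := by linarith
  obtain ⟨N₁, hN₁⟩ := KL (ε / (2 * (M + 1))) (by positivity)
  obtain ⟨N₂, hN₂⟩ := hUtil (ε / 2) (by positivity)
  refine ⟨max N₁ N₂, fun n hn t s hst => ?_⟩
  have hEF : |Real.exp (-∫ σ in s..t, b (σ + u (φ₁ (φ₂ n)))) -
      Real.exp (-∫ σ in s..t, btil σ)| < ε / (2 * (M + 1)) :=
    hN₁ n (le_trans (le_max_left _ _) hn) t s hst
  have hAB : ‖U₂ (t + u (φ₁ (φ₂ n))) (s + u (φ₁ (φ₂ n))) - Util t s‖ < ε / 2 :=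
    hN₂ n (le_trans (le_max_right _ _) hn) t s hst
  show ‖Real.exp (-∫ σ in s..t, b (σ + u (φ₁ (φ₂ n)))) •
      U₂ (t + u (φ₁ (φ₂ n))) (s + u (φ₁ (φ₂ n))) -
      Real.exp (-∫ σ in s..t, btil σ) • Util t s‖ < ε
  set Φ : ℝ := ∫ σ in s..t, b (σ + u (φ₁ (φ₂ n))) with hΦ
  set Ψ : ℝ := ∫ σ in s..t, btil σ with hΨ
  set A : X →L[ℝ] X := U₂ (t + u (φ₁ (φ₂ n))) (s + u (φ₁ (φ₂ n))) with hA
  set B : X →L[ℝ] X := Util t s with hB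
  have hE1 : Real.exp (-Φ) ≤ 1 := by
    have h := intervalIntegral.integral_nonneg (μ := volume) hst (fun x _ => hbnn (x + u (φ₁ (φ₂ n))))
    have h2 := Real.exp_le_exp.mpr (neg_nonpos.mpr h)
    rw [Real.exp_zero] at h2
    exact h2
  have key : Real.exp (-Φ) • A - Real.exp (-Ψ) • B
      = Real.exp (-Φ) • (A - B) + (Real.exp (-Φ) - Real.exp (-Ψ)) • B := by
    rw [smul_sub, sub_smul]; abel
  rw [key]
  have h1 : ‖Real.exp (-Φ) • (A - B)‖ ≤ ‖A - B‖ := by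
    have hns : ‖Real.exp (-Φ) • (A - B)‖ = |Real.exp (-Φ)| * ‖A - B‖ := norm_smul (Real.exp (-Φ)) (A - B)
    rw [hns, abs_of_pos (Real.exp_pos _)]
    exact mul_le_of_le_one_left (norm_nonneg _) hE1
  have h2 : ‖(Real.exp (-Φ) - Real.exp (-Ψ)) • B‖ ≤ |Real.exp (-Φ) - Real.exp (-Ψ)| * (M + 1) := by
    have hns : ‖(Real.exp (-Φ) - Real.exp (-Ψ)) • B‖
        = |Real.exp (-Φ) - Real.exp (-Ψ)| * ‖B‖ := norm_smul (Real.exp (-Φ) - Real.exp (-Ψ)) B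
    rw [hns]
    exact mul_le_mul_of_nonneg_left (hUb t s hst) (abs_nonneg _)
  have h3 : |Real.exp (-Φ) - Real.exp (-Ψ)| * (M + 1) < (ε / (2 * (M + 1))) * (M + 1) :=
    mul_lt_mul_of_pos_right hEF hM1
  have h4 : (ε / (2 * (M + 1))) * (M + 1) = ε / 2 := by field_simp
  have h5 := norm_add_le (Real.exp (-Φ) • (A - B)) ((Real.exp (-Φ) - Real.exp (-Ψ)) • B)
  linarith
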